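/- Let H_p = α_p E + (1 − rα_p) I ∈ R^{r×r} with α_p = (1/r)(1 − (1/√(r−1))·(q/p)), where E is the all-ones matrix, p ∈ [1, √(r−1)], q = √(r − p²), r ≥ 2. Then each column v_i of H_p satisfies e^T v_i = 1 and p‖v_i‖ = 1, i.e. the columns lie on the boundary of the cone S_p intersected with the unit simplex. -/

import Mathlib

open scoped BigOperators

/-- The `i`-th column of `H_p = α_p E + (1 - r α_p) I`, as a Euclidean vector. -/
noncomputable def HpCol (r : ℕ) (α : ℝ) (i : Fin r) : EuclideanSpace ℝ (Fin r) :=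
  (WithLp.equiv 2 (Fin r → ℝ)).symm fun j => α + if j = i then 1 - (r : ℝ) * α else 0

/-- With `α_p = (1/r)(1 - (1/√(r-1))·(q/p))`, `q = √(r - p²)`, `p ∈ [1, √(r-1)]`,
each column `v_i` of `H_p` satisfies `e^T v_i = 1` and `p‖v_i‖ = 1`, i.e. the columns
lie on the boundary of `S_p` intersected with the unit simplex. -/
theorem stmt8 (r : ℕ) (hr : 2 ≤ r) (p q α : ℝ) (hp1 : 1 ≤ p)
    (hpr : p ≤ Real.sqrt ((r : ℝ) - 1))
    (hq : q = Real.sqrt ((r : ℝ) - p ^ 2))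
    (hα : α = (1 / (r : ℝ)) * (1 - (1 / Real.sqrt ((r : ℝ) - 1)) * (q / p))) :
    ∀ i : Fin r, (∑ j, HpCol r α i j = 1) ∧ p * ‖HpCol r α i‖ = 1 := by
  intro i
  have hp0 : (0:ℝ) < p := lt_of_lt_of_le one_pos hp1
  have hr1 : (1:ℝ) ≤ (r : ℝ) - 1 := by
    have : (2:ℝ) ≤ (r:ℝ) := by exact_mod_cast hr
    linarith
  set s : ℝ := Real.sqrt ((r : ℝ) - 1) with hs
  have hs2 : s ^ 2 = (r:ℝ) - 1 := Real.sq_sqrt (by linarith)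
  have hs0 : 0 < s := Real.sqrt_pos.mpr (by linarith)
  have hp2 : p ^ 2 ≤ (r:ℝ) - 1 := by
    calc p ^ 2 ≤ s ^ 2 := by nlinarith
    _ = (r:ℝ) - 1 := hs2
  have hq2 : q ^ 2 = (r:ℝ) - p ^ 2 := by
    rw [hq]; exact Real.sq_sqrt (by linarith)
  have hrr : (0:ℝ) < (r:ℝ) := by linarith
  have hentry : ∀ j : Fin r, HpCol r α i j = α + if j = i then 1 - (r : ℝ) * α else 0 := by
    intro j; rfl
  constructor
  · simp only [hentry]
    rw [Finset.sum_add_distrib, Finset.sum_ite_eq', Finset.sum_const]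
    simp [Finset.card_univ]
  · have hsum : ∑ j, (HpCol r α i j) ^ 2
        = (r:ℝ) * α ^ 2 + (2 * α * (1 - (r:ℝ)*α) + (1 - (r:ℝ)*α) ^ 2) := by
      simp only [hentry]
      have h2 : ∀ j : Fin r, (α + if j = i then 1 - (r : ℝ) * α else 0) ^ 2
          = α ^ 2 + (if j = i then 2 * α * (1 - (r:ℝ)*α) + (1 - (r:ℝ)*α)^2 else 0) := by
        intro j; by_cases h : j = i <;> simp [h] <;> ring
      simp only [h2]
      rw [Finset.sum_add_distrib, Finset.sum_ite_eq', Finset.sum_const]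
      simp [Finset.card_univ]
    have hA0 : α * ((r:ℝ)*s*p) = s*p - q := by
      rw [hα]; field_simp
    have hA : α = (s*p - q)/((r:ℝ)*s*p) := by
      rw [eq_div_iff (by positivity)]; exact hA0
    have hkey : p ^ 2 * (∑ j, (HpCol r α i j) ^ 2) = 1 := by
      rw [hsum, hA]
      field_simp
      linear_combination ((r:ℝ) - 1) * hq2 + (p^2 - (r:ℝ)) * hs2
    have hnorm : ‖HpCol r α i‖ = Real.sqrt (∑ j, (HpCol r α i j) ^ 2) := by
      rw [EuclideanSpace.norm_eq]
      simp only [Real.norm_eq_abs, sq_abs]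
    rw [hnorm]
    have hps : p = Real.sqrt (p ^ 2) := (Real.sqrt_sq hp0.le).symm
    rw [hps, ← Real.sqrt_mul (sq_nonneg p), hkey, Real.sqrt_one]
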